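/- Let k ≥ 2 and 1 ≤ s ≤ k be integers. There exist absolute constants c₁, c₂, c₃ > 0 and a subset S₀ of {0,1}^k such that: (i) log|S₀| ≥ c₁ s log(ek/s); (ii) c₂ s ≤ ‖a‖₀ ≤ s for all a ∈ S₀, with ‖a‖₀ = s for all a ∈ S₀ whenever s ≤ k/2; (iii) ‖a − b‖₂² ≥ c₃ s for all distinct a, b ∈ S₀. -/

import Mathlib

open scoped BigOperators

open Finset Real

lemma vg_choose_mono_half (n : ℕ) : ∀ t : ℕ, ∀ j : ℕ, j ≤ t → 2*t ≤ n → n.choose j ≤ n.choose t := by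
  intro t
  induction t with
  | zero => intro j hj _; simp [Nat.le_zero.1 hj]
  | succ t ih =>
    intro j hj h2
    rcases Nat.eq_or_lt_of_le hj with rfl | hlt
    · exact le_rfl
    · have h1 : n.choose j ≤ n.choose t := ih j (by omega) (by omega)
      refine h1.trans ?_
      have := Nat.choose_succ_right_eq n t
      -- n.choose (t+1) * (t+1) = n.choose t * (n - t)
      have hle : n.choose t * (t+1) ≤ n.choose (t+1) * (t+1) := by
        rw [this]
        exact Nat.mul_le_mul_left _ (by omega)
      exact Nat.le_of_mul_le_mul_right hle (by omega)

lemma vg_pow_le_choose : ∀ m : ℕ, ∀ k : ℕ, m ≤ k → ((k:ℝ)/m)^m ≤ k.choose m := by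
  intro m
  induction m with
  | zero => intro k _; simp
  | succ m ih =>
    intro k hk
    have hk1 : 1 ≤ k := by omega
    have key : (k:ℝ) * (k-1).choose m = k.choose (m+1) * (m+1) := by
      have := Nat.add_one_mul_choose_eq (k-1) m
      have h2 : (k-1) + 1 = k := by omega
      rw [h2] at this
      exact_mod_cast congrArg (Nat.cast : ℕ → ℝ) this
    have hstep : ((k:ℝ)/(m+1))^m ≤ ((k-1:ℝ)/m)^m := by
      rcases Nat.eq_zero_or_pos m with rfl | hm
      · simp
      · apply pow_le_pow_left₀ (by positivity)
        rw [div_le_div_iff₀ (by positivity) (by exact_mod_cast hm)]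
        have : ((m:ℝ)+1) ≤ k := by exact_mod_cast hk
        nlinarith [hm.le, (Nat.cast_le (α := ℝ)).2 hm]
    have hih : ((k-1:ℝ)/m)^m ≤ (k-1).choose m := by
      have := ih (k-1) (by omega)
      have hc : ((k-1:ℕ):ℝ) = (k:ℝ) - 1 := by
        have : (1:ℕ) ≤ k := hk1
        push_cast [Nat.cast_sub this]; ring
      rwa [hc] at this
    calc ((k:ℝ)/(m+1 : ℕ))^(m+1) = ((k:ℝ)/(m+1)) * ((k:ℝ)/(m+1))^m := by
          push_cast; ring
      _ ≤ ((k:ℝ)/(m+1)) * (k-1).choose m := by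
          apply mul_le_mul_of_nonneg_left (hstep.trans hih) (by positivity)
      _ = ((k:ℝ) * (k-1).choose m) / (m+1) := by ring
      _ = (k.choose (m+1) * (m+1)) / (m+1) := by rw [key]
      _ = k.choose (m+1) := by field_simp

-- choose n t ≤ (e n / t)^t
lemma vg_choose_le_epow (n t : ℕ) (ht : 1 ≤ t) (htn : t ≤ n) :
    (n.choose t : ℝ) ≤ (Real.exp 1 * n / t)^t := by
  have h1 : (n.choose t : ℝ) ≤ (n:ℝ)^t / t.factorial := Nat.choose_le_pow_div t n
  have h2 : (t:ℝ)^t / t.factorial ≤ Real.exp t := Real.pow_div_factorial_le_exp (x := (t:ℝ)) (by positivity) t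
  have htpos : (0:ℝ) < t := by exact_mod_cast ht
  have hfac : (0:ℝ) < t.factorial := by exact_mod_cast t.factorial_pos
  -- 1/t! ≤ exp t / t^t
  have h3 : (1:ℝ) / t.factorial ≤ Real.exp t / (t:ℝ)^t := by
    rw [div_le_div_iff₀ hfac (by positivity)]
    calc (1:ℝ) * (t:ℝ)^t = (t:ℝ)^t / t.factorial * t.factorial := by field_simp
      _ ≤ Real.exp t * t.factorial := by
          exact mul_le_mul_of_nonneg_right h2 hfac.le
  calc (n.choose t : ℝ) ≤ (n:ℝ)^t / t.factorial := h1
    _ = (n:ℝ)^t * ((1:ℝ)/t.factorial) := by ring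
    _ ≤ (n:ℝ)^t * (Real.exp t / (t:ℝ)^t) := by
        exact mul_le_mul_of_nonneg_left h3 (by positivity)
    _ = (Real.exp 1 * n / t)^t := by
        rw [div_pow, mul_pow, ← Real.exp_one_pow]
        field_simp
lemma vg_log_lb (k m t P : ℕ) (hm : 1 ≤ m) (ht1 : 1 ≤ t) (htm : 100*t ≤ m + 99)
    (hmt : m ≤ 100*t) (h2m : 2*m ≤ k)
    (hP1 : t = 1 → k.choose m ≤ P)
    (hP2 : 2 ≤ t → k.choose m ≤ P * (t * (m.choose t * (k-m).choose t))) :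
    (1/2 : ℝ) * m * (Real.log k - Real.log m) ≤ Real.log P := by
  have hmk : m ≤ k := by omega
  have hkpos : (0:ℝ) < k := by exact_mod_cast (by omega : 0 < k)
  have hmpos : (0:ℝ) < m := by exact_mod_cast hm
  have hchoosepos : 0 < k.choose m := Nat.choose_pos hmk
  have hA : (m:ℝ) * (Real.log k - Real.log m) ≤ Real.log (k.choose m) := by
    have h := vg_pow_le_choose m k hmk
    have h2 : Real.log (((k:ℝ)/m)^m) ≤ Real.log (k.choose m) :=
      Real.log_le_log (by positivity) h
    rwa [Real.log_pow, Real.log_div (ne_of_gt hkpos) (ne_of_gt hmpos)] at h2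
  have hL2 : Real.log 2 ≤ Real.log k - Real.log m := by
    have h := Real.log_le_log (by positivity : (0:ℝ) < 2*m) (by exact_mod_cast h2m : (2*m:ℝ) ≤ k)
    rw [Real.log_mul (by norm_num) (ne_of_gt hmpos)] at h
    linarith
  have hlog2 : (0.6931471803:ℝ) < Real.log 2 := Real.log_two_gt_d9
  have hLpos : (0:ℝ) < Real.log k - Real.log m := by linarith
  rcases Nat.lt_or_ge t 2 with ht2 | ht2
  · -- t = 1
    have hP := hP1 (by omega)
    have : Real.log (k.choose m) ≤ Real.log P :=
      Real.log_le_log (by exact_mod_cast hchoosepos) (by exact_mod_cast hP)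
    nlinarith
  · -- t ≥ 2
    have h50 : 50*t ≤ m := by omega
    have htmle : t ≤ m := by omega
    have htk2 : t ≤ k - m := by omega
    have htpos : (0:ℝ) < t := by exact_mod_cast ht1
    have hm2pos : 0 < k - m := by omega
    have hkm : ((k-m:ℕ):ℝ) ≤ (k:ℝ) := by exact_mod_cast (by omega : k - m ≤ k)
    have hBm : Real.log (m.choose t) ≤ t * (1 + Real.log m - Real.log t) := by
      have h := vg_choose_le_epow m t ht1 htmle
      have h2 : Real.log (m.choose t) ≤ Real.log ((Real.exp 1 * m / t)^t) :=
        Real.log_le_log (by exact_mod_cast Nat.choose_pos htmle) h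
      rwa [Real.log_pow, Real.log_div (by positivity) (ne_of_gt htpos),
        Real.log_mul (by positivity) (ne_of_gt hmpos), Real.log_exp] at h2
    have hBk : Real.log ((k-m).choose t) ≤ t * (1 + Real.log k - Real.log t) := by
      have h := vg_choose_le_epow (k-m) t ht1 htk2
      have hkmpos : (0:ℝ) < ((k-m:ℕ):ℝ) := by exact_mod_cast hm2pos
      have h2 : Real.log ((k-m).choose t) ≤ Real.log ((Real.exp 1 * (k-m:ℕ) / t)^t) :=
        Real.log_le_log (by exact_mod_cast Nat.choose_pos htk2) h
      rw [Real.log_pow, Real.log_div (by positivity) (ne_of_gt htpos),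
        Real.log_mul (by positivity) (ne_of_gt hkmpos), Real.log_exp] at h2
      have : Real.log ((k-m:ℕ):ℝ) ≤ Real.log k := Real.log_le_log hkmpos hkm
      nlinarith
    have hlt : Real.log t ≤ (t:ℝ) := by
      have := Real.log_le_sub_one_of_pos htpos
      linarith
    have hml : Real.log m - Real.log t ≤ 5 := by
      have h1 : Real.log m ≤ Real.log (100*t) :=
        Real.log_le_log hmpos (by exact_mod_cast hmt)
      rw [Real.log_mul (by norm_num) (ne_of_gt htpos)] at h1
      have h100 : Real.log 100 ≤ 5 := by
        rw [Real.log_le_iff_le_exp (by norm_num)]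
        have h5 : Real.exp 5 = Real.exp 1 ^ 5 := by
          rw [← Real.exp_nat_mul]; norm_num
        have h6 : (2.7182818283:ℝ)^5 ≤ Real.exp 1 ^ 5 :=
          pow_le_pow_left₀ (by norm_num) Real.exp_one_gt_d9.le 5
        nlinarith [h6]
      linarith
    have hPbig := hP2 ht2
    have hmcpos : (0:ℝ) < (m.choose t : ℝ) := by exact_mod_cast Nat.choose_pos htmle
    have hkcpos : (0:ℝ) < ((k-m).choose t : ℝ) := by exact_mod_cast Nat.choose_pos htk2
    have hPpos : 0 < P := by
      rcases Nat.eq_zero_or_pos P with rfl | h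
      · simp at hPbig; omega
      · exact h
    have hPposR : (0:ℝ) < P := by exact_mod_cast hPpos
    have hlogchain : Real.log (k.choose m) ≤ Real.log P + Real.log t
        + Real.log (m.choose t) + Real.log ((k-m).choose t) := by
      have hrhs :  (k.choose m : ℝ) ≤ (P:ℝ) * ((t:ℝ) * ((m.choose t:ℝ) * ((k-m).choose t:ℝ))) := by
        exact_mod_cast hPbig
      have h := Real.log_le_log (by exact_mod_cast hchoosepos) hrhs
      rw [Real.log_mul (ne_of_gt hPposR) (by positivity),
          Real.log_mul (ne_of_gt htpos) (by positivity),
          Real.log_mul (ne_of_gt hmcpos) (ne_of_gt hkcpos)] at h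
      linarith
    set L := Real.log k - Real.log m with hLdef
    set lt' := Real.log t with hltdef
    have p1 : (t:ℝ)*(Real.log m - lt') ≤ (t:ℝ)*5 := mul_le_mul_of_nonneg_left hml htpos.le
    have e2 : (t:ℝ)*(1 + Real.log m - lt') ≤ 6*t := by ring_nf at p1 ⊢; linarith [p1]
    have q : Real.log k - lt' ≤ L + 5 := by rw [hLdef]; linarith
    have p2 : (t:ℝ)*(Real.log k - lt') ≤ (t:ℝ)*(L+5) := mul_le_mul_of_nonneg_left q htpos.le
    have e3 : (t:ℝ)*(1 + Real.log k - lt') ≤ 6*t + t*L := by ring_nf at p2 ⊢; linarith [p2]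
    have e5 : (t:ℝ) ≤ (m:ℝ)/50 := by
      have : (50:ℝ)*t ≤ m := by exact_mod_cast h50
      linarith
    have e6 : (t:ℝ)*L ≤ ((m:ℝ)/50)*L := mul_le_mul_of_nonneg_right e5 hLpos.le
    have e7 : (13/24:ℝ) ≤ L := by linarith
    have e8 : (0:ℝ) ≤ (m:ℝ)*(L*(24/50) - 13/50) := by
      apply mul_nonneg hmpos.le; linarith
    ring_nf at hA hlogchain hBm hBk e2 e3 e6 e8 ⊢
    linarith [hA, hlogchain, hBm, hBk, hlt, e2, e3, e5, e6, e8]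

lemma vg_packing (k m t : ℕ) (ht : 1 ≤ t) (htm : t ≤ m) (hmk : m ≤ k) :
    ∃ P : Finset (Finset (Fin k)),
      (∀ A ∈ P, A.card = m) ∧
      (∀ A ∈ P, ∀ B ∈ P, A ≠ B → (A ∩ B).card + t ≤ m) ∧
      k.choose m ≤ P.card * ∑ j ∈ Finset.range t, (m.choose j) * ((k-m).choose j) := by
  classical
  set W : Finset (Finset (Fin k)) := powersetCard m univ with hW
  have hWmem : ∀ A, A ∈ W ↔ A.card = m := by
    intro A; simp [hW, mem_powersetCard]
  set F : Finset (Finset (Finset (Fin k))) :=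
    W.powerset.filter (fun Q => ∀ A ∈ Q, ∀ B ∈ Q, A ≠ B → (A ∩ B).card + t ≤ m) with hF
  have hFne : F.Nonempty := by
    refine ⟨∅, ?_⟩
    simp [hF]
  obtain ⟨P, hPF, hmax⟩ := F.exists_max_image (fun Q => Q.card) hFne
  rw [hF, mem_filter, mem_powerset] at hPF
  obtain ⟨hPW, hgood⟩ := hPF
  refine ⟨P, fun A hA => (hWmem A).1 (hPW hA), hgood, ?_⟩
  -- covering property
  have hcover : ∀ A ∈ W, ∃ B ∈ P, m + 1 ≤ (A ∩ B).card + t := by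
    intro A hA
    by_contra hcon
    push_neg at hcon
    have hAnotP : A ∉ P := by
      intro hAP
      have := hcon A hAP
      have : (A ∩ A).card = m := by rw [inter_self]; exact (hWmem A).1 hA
      omega
    have hQF : insert A P ∈ F := by
      rw [hF, mem_filter, mem_powerset]
      constructor
      · exact insert_subset hA hPW
      · intro X hX Y hY hXY
        rcases mem_insert.1 hX with rfl | hXP
        · rcases mem_insert.1 hY with rfl | hYP
          · exact absurd rfl hXY
          · have := hcon Y hYP; omega
        · rcases mem_insert.1 hY with rfl | hYP
          · have := hcon X hXP; rw [inter_comm]; omega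
          · exact hgood X hXP Y hYP hXY
    have := hmax _ hQF
    rw [card_insert_of_notMem hAnotP] at this
    omega
  -- ball bound
  have hball : ∀ B, B.card = m →
      (W.filter (fun A => m + 1 ≤ (A ∩ B).card + t)).card
        ≤ ∑ j ∈ Finset.range t, (m.choose j) * ((k-m).choose j) := by
    intro B hB
    set T : Finset (Finset (Fin k) × Finset (Fin k)) :=
      (Finset.range t).biUnion (fun j => (powersetCard j B) ×ˢ (powersetCard j Bᶜ)) with hT
    have hcard : ∀ A ∈ W.filter (fun A => m + 1 ≤ (A ∩ B).card + t),
        (B \ A).card = m - (A ∩ B).card ∧ (A \ B).card = m - (A ∩ B).card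
          ∧ (A ∩ B).card + t ≥ m + 1 ∧ (A ∩ B).card ≤ m := by
      intro A hA
      rw [mem_filter] at hA
      obtain ⟨hAW, hAball⟩ := hA
      have hAm := (hWmem A).1 hAW
      have h1 := card_inter_add_card_sdiff B A
      have h2 := card_inter_add_card_sdiff A B
      rw [inter_comm B A] at h1
      have h3 : (A ∩ B).card ≤ m := by omega
      omega
    have hsub : ∀ A ∈ W.filter (fun A => m + 1 ≤ (A ∩ B).card + t), (B \ A, A \ B) ∈ T := by
      intro A hA
      obtain ⟨h1, h2, h3, h4⟩ := hcard A hA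
      rw [hT, mem_biUnion]
      refine ⟨m - (A ∩ B).card, ?_, ?_⟩
      · rw [Finset.mem_range]; omega
      · rw [mem_product]
        constructor
        · rw [mem_powersetCard]; exact ⟨sdiff_subset, h1⟩
        · rw [mem_powersetCard]
          refine ⟨?_, h2⟩
          intro x hx
          rw [Finset.mem_compl]
          exact (Finset.mem_sdiff.1 hx).2
    have hinj : Set.InjOn (fun A => (B \ A, A \ B))
        (W.filter (fun A => m + 1 ≤ (A ∩ B).card + t)) := by
      intro A₁ h₁ A₂ h₂ heq
      simp only [Prod.mk.injEq] at heq
      have key : ∀ A : Finset (Fin k), (B \ (B \ A)) ∪ (A \ B) = A := by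
        intro A; ext i
        simp only [Finset.mem_union, Finset.mem_sdiff]
        tauto
      calc A₁ = (B \ (B \ A₁)) ∪ (A₁ \ B) := (key A₁).symm
        _ = (B \ (B \ A₂)) ∪ (A₂ \ B) := by rw [heq.1, heq.2]
        _ = A₂ := key A₂
    calc (W.filter (fun A => m + 1 ≤ (A ∩ B).card + t)).card
        ≤ T.card := Finset.card_le_card_of_injOn _ hsub hinj
      _ ≤ ∑ j ∈ Finset.range t, ((powersetCard j B) ×ˢ (powersetCard j Bᶜ)).card :=
          card_biUnion_le
      _ = ∑ j ∈ Finset.range t, (m.choose j) * ((k-m).choose j) := by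
          apply Finset.sum_congr rfl
          intro j _
          rw [card_product, card_powersetCard, card_powersetCard, card_compl,
            Fintype.card_fin, hB]
  -- combine
  have hWsub : W ⊆ P.biUnion (fun B => W.filter (fun A => m + 1 ≤ (A ∩ B).card + t)) := by
    intro A hA
    obtain ⟨B, hBP, hAB⟩ := hcover A hA
    rw [mem_biUnion]
    exact ⟨B, hBP, by rw [mem_filter]; exact ⟨hA, hAB⟩⟩
  have hWcard : W.card = k.choose m := by
    rw [hW, card_powersetCard, card_univ, Fintype.card_fin]
  calc k.choose m = W.card := hWcard.symm
    _ ≤ (P.biUnion (fun B => W.filter (fun A => m + 1 ≤ (A ∩ B).card + t))).card :=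
        Finset.card_le_card hWsub
    _ ≤ ∑ B ∈ P, (W.filter (fun A => m + 1 ≤ (A ∩ B).card + t)).card := card_biUnion_le
    _ ≤ ∑ _B ∈ P, ∑ j ∈ Finset.range t, (m.choose j) * ((k-m).choose j) := by
        apply Finset.sum_le_sum
        intro B hBP
        exact hball B ((hWmem B).1 (hPW hBP))
    _ = P.card * ∑ j ∈ Finset.range t, (m.choose j) * ((k-m).choose j) := by
        rw [Finset.sum_const, smul_eq_mul]


/-- Sparse Varshamov–Gilbert type bound: there exist absolute constants
`c₁, c₂, c₃ > 0` such that for all integers `2 ≤ k` and `1 ≤ s ≤ k` there is a set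
`S₀ ⊆ {0,1}^k` with `log|S₀| ≥ c₁ s log(ek/s)`, sparsity `c₂ s ≤ ‖a‖₀ ≤ s` (with
`‖a‖₀ = s` whenever `s ≤ k/2`), and pairwise squared distances at least `c₃ s`. -/
theorem exists_sparse_varshamov_gilbert :
    ∃ c₁ c₂ c₃ : ℝ, 0 < c₁ ∧ 0 < c₂ ∧ 0 < c₃ ∧
      ∀ k s : ℕ, 2 ≤ k → 1 ≤ s → s ≤ k →
        ∃ S₀ : Finset (Fin k → Bool),
          (c₁ * s * Real.log (Real.exp 1 * k / s) ≤ Real.log S₀.card) ∧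
          (∀ a ∈ S₀,
            c₂ * s ≤ ((Finset.univ.filter fun i => a i = true).card : ℝ) ∧
            (Finset.univ.filter fun i => a i = true).card ≤ s) ∧
          ((s : ℝ) ≤ k / 2 → ∀ a ∈ S₀,
            (Finset.univ.filter fun i => a i = true).card = s) ∧
          (∀ a ∈ S₀, ∀ b ∈ S₀, a ≠ b →
            c₃ * s ≤ ((Finset.univ.filter fun i => a i ≠ b i).card : ℝ)) := by
  refine ⟨1/24, 1/4, 1/200, by norm_num, by norm_num, by norm_num, ?_⟩
  intro k s hk hs hsk
  classical
  set m : ℕ := if 2*s ≤ k then s else (k+3)/4 with hmdef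
  set t : ℕ := (m+99)/100 with htdef
  have hmcases : m = s ∨ m = (k+3)/4 := by
    rw [hmdef]; split_ifs <;> simp
  have hmif : 2*s ≤ k → m = s := by
    intro h; rw [hmdef, if_pos h]
  have hmif2 : ¬(2*s ≤ k) → m = (k+3)/4 := by
    intro h; rw [hmdef, if_neg h]
  have hm1 : 1 ≤ m := by rcases hmcases with h | h <;> omega
  have hmk2 : 2*m ≤ k := by
    rcases le_or_gt (2*s) k with h | h
    · rw [hmif h]; omega
    · rw [hmif2 (by omega)]; omega
  have hms : m ≤ s := by
    rcases le_or_gt (2*s) k with h | h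
    · rw [hmif h]
    · rw [hmif2 (by omega)]; omega
  have hsm : s ≤ 4*m := by
    rcases le_or_gt (2*s) k with h | h
    · rw [hmif h]; omega
    · rw [hmif2 (by omega)]; omega
  have ht1 : 1 ≤ t := by omega
  have htm : t ≤ m := by omega
  have h100 : 100*t ≤ m + 99 := by omega
  have hm100 : m ≤ 100*t := by omega
  obtain ⟨P, hPcard, hPdist, hPbound⟩ := vg_packing k m t ht1 htm (by omega)
  -- the two cardinality bounds
  have hP1 : t = 1 → k.choose m ≤ P.card := by
    intro h
    rw [h] at hPbound
    simpa using hPbound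
  have hP2 : 2 ≤ t → k.choose m ≤ P.card * (t * (m.choose t * (k-m).choose t)) := by
    intro ht2
    have h2tm : 2*t ≤ m := by omega
    have h2tkm : 2*t ≤ k - m := by omega
    have hsum : ∑ j ∈ Finset.range t, (m.choose j) * ((k-m).choose j)
        ≤ t * (m.choose t * (k-m).choose t) := by
      calc ∑ j ∈ Finset.range t, (m.choose j) * ((k-m).choose j)
          ≤ (Finset.range t).card • (m.choose t * (k-m).choose t) := by
            apply Finset.sum_le_card_nsmul
            intro j hj
            have hjt : j ≤ t := (Finset.mem_range.1 hj).le
            exact Nat.mul_le_mul (vg_choose_mono_half m t j hjt h2tm)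
              (vg_choose_mono_half (k-m) t j hjt h2tkm)
        _ = t * (m.choose t * (k-m).choose t) := by rw [Finset.card_range, smul_eq_mul]
    exact hPbound.trans (Nat.mul_le_mul_left _ hsum)
  -- the set of boolean vectors
  set S₀ : Finset (Fin k → Bool) := P.image (fun A => fun i => decide (i ∈ A)) with hS₀
  have hinj : Set.InjOn (fun (A : Finset (Fin k)) => fun i => decide (i ∈ A)) P := by
    intro A _ B _ h
    ext i
    have := congrFun h i
    simpa using this
  have hcardS : S₀.card = P.card := Finset.card_image_of_injOn hinj
  have hfilt : ∀ A : Finset (Fin k),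
      (Finset.univ.filter fun i => decide (i ∈ A) = true) = A := by
    intro A; ext i; simp
  refine ⟨S₀, ?_, ?_, ?_, ?_⟩
  · -- log cardinality bound
    have hlb := vg_log_lb k m t P.card hm1 ht1 h100 hm100 hmk2 hP1 hP2
    rw [hcardS]
    have hspos : (0:ℝ) < s := by exact_mod_cast hs
    have hkpos : (0:ℝ) < k := by exact_mod_cast (by omega : 0 < k)
    have hmpos : (0:ℝ) < m := by exact_mod_cast hm1
    have hlogsplit : Real.log (Real.exp 1 * k / s) = 1 + Real.log k - Real.log s := by
      rw [Real.log_div (by positivity) (ne_of_gt hspos),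
        Real.log_mul (Real.exp_ne_zero 1) (ne_of_gt hkpos), Real.log_exp]
    rw [hlogsplit]
    have hls : Real.log m ≤ Real.log s := Real.log_le_log hmpos (by exact_mod_cast hms)
    have hlsk : Real.log s ≤ Real.log k := Real.log_le_log hspos (by exact_mod_cast hsk)
    have hL2 : Real.log 2 ≤ Real.log k - Real.log m := by
      have h := Real.log_le_log (by positivity : (0:ℝ) < 2*m)
        (by exact_mod_cast hmk2 : (2*m:ℝ) ≤ k)
      rw [Real.log_mul (by norm_num) (ne_of_gt hmpos)] at h
      linarith
    have hlog2 : (0.6931471803:ℝ) < Real.log 2 := Real.log_two_gt_d9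
    have hX0 : (0:ℝ) ≤ 1 + Real.log k - Real.log s := by linarith
    have hX3L : 1 + Real.log k - Real.log s ≤ 3*(Real.log k - Real.log m) := by linarith
    have hs4m : (s:ℝ) ≤ 4*m := by exact_mod_cast hsm
    have key : (s:ℝ)*(1 + Real.log k - Real.log s)
        ≤ (4*(m:ℝ))*(3*(Real.log k - Real.log m)) :=
      mul_le_mul hs4m hX3L hX0 (by positivity)
    nlinarith [key, hlb]
  · -- sparsity
    intro a ha
    rw [hS₀, Finset.mem_image] at ha
    obtain ⟨A, hAP, rfl⟩ := ha
    rw [hfilt A, hPcard A hAP]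
    constructor
    · have hs4m : (s:ℝ) ≤ 4*m := by exact_mod_cast hsm
      linarith
    · exact hms
  · -- exact sparsity when s small
    intro hhalf a ha
    have h2s : 2*s ≤ k := by
      have : (2*s:ℝ) ≤ k := by
        push_cast
        linarith
      exact_mod_cast this
    rw [hS₀, Finset.mem_image] at ha
    obtain ⟨A, hAP, rfl⟩ := ha
    rw [hfilt A, hPcard A hAP, hmif h2s]
  · -- distances
    intro a ha b hb hab
    rw [hS₀, Finset.mem_image] at ha hb
    obtain ⟨A, hAP, rfl⟩ := ha
    obtain ⟨B, hBP, rfl⟩ := hb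
    have hABne : A ≠ B := by
      rintro rfl; exact hab rfl
    have hdistset : (Finset.univ.filter fun i => decide (i ∈ A) ≠ decide (i ∈ B))
        = (A \ B) ∪ (B \ A) := by
      ext i
      simp only [Finset.mem_filter, Finset.mem_univ, true_and, Finset.mem_union,
        Finset.mem_sdiff, ne_eq, decide_eq_decide]
      by_cases h1 : i ∈ A <;> by_cases h2 : i ∈ B <;> simp [h1, h2]
    have hdisj : Disjoint (A \ B) (B \ A) := disjoint_sdiff_sdiff
    have hcardAB := Finset.card_inter_add_card_sdiff A B
    have hcardBA := Finset.card_inter_add_card_sdiff B A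
    rw [Finset.inter_comm B A] at hcardBA
    have hAm := hPcard A hAP
    have hBm := hPcard B hBP
    have hint := hPdist A hAP B hBP hABne
    have hge : 2*t ≤ ((A \ B) ∪ (B \ A)).card := by
      rw [Finset.card_union_of_disjoint hdisj]
      omega
    have hs400 : s ≤ 400*t := by omega
    rw [hdistset]
    have h1 : (s:ℝ) ≤ 400*t := by exact_mod_cast hs400
    have h2 : (2*t:ℝ) ≤ (((A \ B) ∪ (B \ A)).card : ℝ) := by exact_mod_cast hge
    linarith
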